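/- Let f, g : H → ℝ ∪ {∞} be closed, proper, convex functions on a real Hilbert space H, let γ > 0, let z* be a fixed point of T_PRS and x* := prox_{γg}(z*). Let (λ_j)_{j≥0} ⊆ (0,1], define z^{k+1} = (1−λ_k)z^k + λ_k T_PRS(z^k) from z^0 ∈ H, set x_g^k := prox_{γg}(z^k), x_f^k := prox_{γf}(2x_g^k − z^k), Λ_k := ∑_{i=0}^k λ_i, x̄_f^k := (1/Λ_k)∑_{i=0}^k λ_i x_f^i, and x̄_g^k := (1/Λ_k)∑_{i=0}^k λ_i x_g^i. Then for all k ≥ 0: −2‖z^0 − z*‖·‖z* − x*‖/(γΛ_k) ≤ f(x̄_f^k) + g(x̄_g^k) − f(x*) − g(x*) ≤ ‖z^0 − x*‖²/(4γΛ_k), and ‖x̄_g^k − x̄_f^k‖ ≤ 2‖z^0 − z*‖/Λ_k. -/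

import Mathlib

set_option maxHeartbeats 1000000

open Finset RealInnerProductSpace

section PRSHelpers
variable {H : Type*} [NormedAddCommGroup H] [InnerProductSpace ℝ H]

private lemma aux_le_zero {A B : ℝ} (hB : 0 ≤ B) (h : ∀ t : ℝ, 0 < t → t ≤ 1 → A ≤ t * B) :
    A ≤ 0 := by
  by_contra hA
  push_neg at hA
  have ht1 : (0:ℝ) < A / (2 * (B + 1)) := by positivity
  have h2 := h (min 1 (A / (2 * (B + 1)))) (by positivity) (min_le_left _ _)
  have h3 : min 1 (A / (2 * (B + 1))) ≤ A / (2 * (B + 1)) := min_le_right _ _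
  have h4 : min 1 (A / (2 * (B + 1))) * B ≤ A / (2 * (B + 1)) * B :=
    mul_le_mul_of_nonneg_right h3 hB
  have h5 : A ≤ A / (2 * (B + 1)) * B := le_trans h2 h4
  rw [div_mul_eq_mul_div, le_div_iff₀ (by positivity)] at h5
  nlinarith

private lemma aux_finite {f : H → EReal} (hbot : ∀ x, f x ≠ ⊥) {y0 : H} (hy0 : f y0 ≠ ⊤)
    {p : H} {a b : ℝ} (h : f p + (a : EReal) ≤ f y0 + (b : EReal)) :
    ∃ r : ℝ, f p = (r : EReal) := by
  have htop : f p ≠ ⊤ := by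
    intro hp
    rw [hp, EReal.top_add_coe] at h
    lift f y0 to ℝ using ⟨hy0, hbot y0⟩ with r
    rw [← EReal.coe_add] at h
    exact (EReal.coe_lt_top _).not_ge h
  exact ⟨(f p).toReal, (EReal.coe_toReal htop (hbot p)).symm⟩

private lemma aux_subgrad {f : H → EReal} (hbot : ∀ x, f x ≠ ⊥)
    (hconv : ∀ x y : H, ∀ a b : ℝ, 0 ≤ a → 0 ≤ b → a + b = 1 →
      f (a • x + b • y) ≤ (a : EReal) * f x + (b : EReal) * f y)
    {γ : ℝ} (hγ : 0 < γ) {p x : H} {r : ℝ} (hp : f p = (r : EReal))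
    (hmin : ∀ y : H, f p + ((1 / (2 * γ) * ‖p - x‖ ^ 2 : ℝ) : EReal) ≤
      f y + ((1 / (2 * γ) * ‖y - x‖ ^ 2 : ℝ) : EReal))
    (y : H) :
    ((r + 1 / γ * ⟪x - p, y - p⟫ : ℝ) : EReal) ≤ f y := by
  rcases eq_or_ne (f y) ⊤ with hy | hy
  · rw [hy]; exact le_top
  lift f y to ℝ using ⟨hy, hbot y⟩ with ry hry
  rw [EReal.coe_le_coe_iff]
  set c : ℝ := 1 / (2 * γ) with hc
  have hcpos : 0 < c := by positivity
  have key : ∀ t : ℝ, 0 < t → t ≤ 1 →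
      r + 1 / γ * ⟪x - p, y - p⟫ - ry ≤ t * (c * ‖y - p‖ ^ 2) := by
    intro t ht0 ht1
    have hcv := hconv y p t (1 - t) (le_of_lt ht0) (by linarith) (by ring)
    have hm := hmin (t • y + (1 - t) • p)
    rw [hp] at hm hcv
    rw [← hry] at hcv
    have hcv' : f (t • y + (1 - t) • p) ≤ ((t * ry + (1 - t) * r : ℝ) : EReal) := by
      rw [EReal.coe_add, EReal.coe_mul, EReal.coe_mul]; exact hcv
    have hcomb : ((r + c * ‖p - x‖ ^ 2 : ℝ) : EReal) ≤
        ((t * ry + (1 - t) * r + c * ‖t • y + (1 - t) • p - x‖ ^ 2 : ℝ) : EReal) := by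
      rw [EReal.coe_add, EReal.coe_add]
      calc ((r:EReal) + ((c * ‖p - x‖ ^ 2 : ℝ) : EReal)) ≤
          f (t • y + (1 - t) • p) + ((c * ‖t • y + (1 - t) • p - x‖ ^ 2 : ℝ) : EReal) := hm
        _ ≤ ((t * ry + (1 - t) * r : ℝ) : EReal) +
            ((c * ‖t • y + (1 - t) • p - x‖ ^ 2 : ℝ) : EReal) := by
            exact add_le_add hcv' le_rfl
    rw [EReal.coe_le_coe_iff] at hcomb
    have hexp : t • y + (1 - t) • p - x = (p - x) + t • (y - p) := by module
    rw [hexp] at hcomb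
    have hnorm : ‖(p - x) + t • (y - p)‖ ^ 2 =
        ‖p - x‖ ^ 2 + 2 * (t * ⟪p - x, y - p⟫) + t ^ 2 * ‖y - p‖ ^ 2 := by
      rw [norm_add_sq_real, real_inner_smul_right, norm_smul]
      rw [Real.norm_eq_abs, mul_pow, sq_abs]
    rw [hnorm] at hcomb
    have hinner : ⟪x - p, y - p⟫ = - ⟪p - x, y - p⟫ := by
      rw [← inner_neg_left]; congr 1; abel
    rw [hinner]
    have ht : t * (r - ry) ≤ 2 * c * t * ⟪p - x, y - p⟫ + t ^ 2 * (c * ‖y - p‖ ^ 2) := by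
      nlinarith [hcomb]
    have hgc : 1 / γ = 2 * c := by rw [hc]; field_simp
    rw [hgc]
    have := mul_le_mul_of_nonneg_left ht (le_of_lt (one_div_pos.mpr ht0))
    calc r + 2 * c * (- ⟪p - x, y - p⟫) - ry
        = (1 / t) * (t * (r - ry)) - 2 * c * ⟪p - x, y - p⟫ := by field_simp; ring
      _ ≤ (1 / t) * (2 * c * t * ⟪p - x, y - p⟫ + t ^ 2 * (c * ‖y - p‖ ^ 2))
            - 2 * c * ⟪p - x, y - p⟫ := by linarith [this]
      _ = t * (c * ‖y - p‖ ^ 2) := by field_simp; ring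
  have := aux_le_zero (by positivity : (0:ℝ) ≤ c * ‖y - p‖ ^ 2) key
  linarith

private lemma aux_jensen {f : H → EReal} (hbot : ∀ x, f x ≠ ⊥)
    (hconv : ∀ x y : H, ∀ a b : ℝ, 0 ≤ a → 0 ≤ b → a + b = 1 →
      f (a • x + b • y) ≤ (a : EReal) * f x + (b : EReal) * f y)
    (lam : ℕ → ℝ) (hlam : ∀ k, 0 < lam k)
    (v : ℕ → H) (r : ℕ → ℝ) (hr : ∀ k, f (v k) = (r k : EReal)) :
    ∀ k : ℕ, f ((1 / ∑ i ∈ range (k + 1), lam i) • ∑ i ∈ range (k + 1), lam i • v i) ≤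
      (((1 / ∑ i ∈ range (k + 1), lam i) * ∑ i ∈ range (k + 1), lam i * r i : ℝ) : EReal) := by
  intro k
  induction k with
  | zero =>
      simp only [zero_add, range_one, sum_singleton]
      rw [smul_smul, one_div, inv_mul_cancel₀ (hlam 0).ne', one_smul,
        inv_mul_cancel_left₀ (hlam 0).ne', hr 0]
  | succ n ih =>
      have hΛ : 0 < ∑ i ∈ range (n + 1), lam i := sum_pos (fun i _ => hlam i) nonempty_range_add_one
      have hΛ' : 0 < ∑ i ∈ range (n + 1 + 1), lam i :=
        sum_pos (fun i _ => hlam i) nonempty_range_add_one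
      set Λ := ∑ i ∈ range (n + 1), lam i with hΛdef
      set Λ' := ∑ i ∈ range (n + 1 + 1), lam i with hΛ'def
      have hsum : Λ' = Λ + lam (n + 1) := by rw [hΛ'def, sum_range_succ]
      have hvsum : ∑ i ∈ range (n + 1 + 1), lam i • v i
          = (∑ i ∈ range (n + 1), lam i • v i) + lam (n + 1) • v (n + 1) := sum_range_succ _ _
      have hrsum : ∑ i ∈ range (n + 1 + 1), lam i * r i
          = (∑ i ∈ range (n + 1), lam i * r i) + lam (n + 1) * r (n + 1) := sum_range_succ _ _
      have hcombo : (1 / Λ') • ∑ i ∈ range (n + 1 + 1), lam i • v i =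
          (Λ / Λ') • ((1 / Λ) • ∑ i ∈ range (n + 1), lam i • v i)
            + (lam (n + 1) / Λ') • v (n + 1) := by
        rw [hvsum, smul_add, smul_smul, smul_smul]
        congr 2
        · field_simp
        · field_simp
      have hab : Λ / Λ' + lam (n + 1) / Λ' = 1 := by
        rw [← add_div, ← hsum, div_self hΛ'.ne']
      have h1 := hconv ((1 / Λ) • ∑ i ∈ range (n + 1), lam i • v i) (v (n + 1))
        (Λ / Λ') (lam (n + 1) / Λ') (le_of_lt (div_pos hΛ hΛ'))
        (le_of_lt (div_pos (hlam _) hΛ')) hab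
      have hne : f ((1 / Λ) • ∑ i ∈ range (n + 1), lam i • v i) ≠ ⊤ := by
        intro htop
        rw [htop, top_le_iff] at ih
        exact EReal.coe_ne_top _ ih
      set m := (f ((1 / Λ) • ∑ i ∈ range (n + 1), lam i • v i)).toReal with hm
      have hfm : f ((1 / Λ) • ∑ i ∈ range (n + 1), lam i • v i) = (m : EReal) :=
        (EReal.coe_toReal hne (hbot _)).symm
      have hmle : m ≤ (1 / Λ) * ∑ i ∈ range (n + 1), lam i * r i := by
        rw [hfm] at ih; exact EReal.coe_le_coe_iff.mp ih
      rw [hfm, hr (n + 1), ← EReal.coe_mul, ← EReal.coe_mul, ← EReal.coe_add] at h1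
      rw [hcombo]
      refine le_trans h1 (EReal.coe_le_coe_iff.mpr ?_)
      have h2 : Λ / Λ' * m ≤ Λ / Λ' * ((1 / Λ) * ∑ i ∈ range (n + 1), lam i * r i) :=
        mul_le_mul_of_nonneg_left hmle (le_of_lt (div_pos hΛ hΛ'))
      have h3 : Λ / Λ' * ((1 / Λ) * ∑ i ∈ range (n + 1), lam i * r i)
            + lam (n + 1) / Λ' * r (n + 1)
          = (1 / Λ') * ∑ i ∈ range (n + 1 + 1), lam i * r i := by
        rw [hrsum]
        field_simp
      linarith

private lemma aux_key_id (a b c d : H) :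
    ⟪(2:ℝ) • a - c - b, d - b⟫ + ⟪c - a, d - a⟫ =
      ‖b - a‖ ^ 2 + ⟪c - d, b - a⟫ := by
  rw [← real_inner_self_eq_norm_sq]
  simp only [inner_sub_left, inner_sub_right, real_inner_smul_left]
  rw [real_inner_comm a b, real_inner_comm a d, real_inner_comm b d]
  ring

private lemma aux_refl_nonexp {γ : ℝ} (hγ : 0 < γ) {w v a b : H} {ra rb : ℝ}
    (h1 : ra + 1 / γ * ⟪w - a, b - a⟫ ≤ rb)
    (h2 : rb + 1 / γ * ⟪v - b, a - b⟫ ≤ ra) :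
    ‖((2:ℝ) • a - w) - ((2:ℝ) • b - v)‖ ≤ ‖w - v‖ := by
  have hmono : ⟪w - a, b - a⟫ + ⟪v - b, a - b⟫ ≤ 0 := by
    have h4 : 1 / γ * ⟪w - a, b - a⟫ + 1 / γ * ⟪v - b, a - b⟫ ≤ 0 := by linarith
    have h5 : 1 / γ * (⟪w - a, b - a⟫ + ⟪v - b, a - b⟫) ≤ 0 := by linarith [h4]
    have h6 := mul_le_mul_of_nonneg_left h5 hγ.le
    have h7 : γ * (1 / γ * (⟪w - a, b - a⟫ + ⟪v - b, a - b⟫)) =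
        ⟪w - a, b - a⟫ + ⟪v - b, a - b⟫ := by field_simp
    rw [h7] at h6
    linarith
  have hid : ⟪w - a, b - a⟫ + ⟪v - b, a - b⟫ = ‖a - b‖ ^ 2 - ⟪w - v, a - b⟫ := by
    rw [← real_inner_self_eq_norm_sq]
    simp only [inner_sub_left, inner_sub_right]
    rw [real_inner_comm a b, real_inner_comm a w, real_inner_comm b w,
      real_inner_comm a v, real_inner_comm b v]
    ring
  have hsq : ‖((2:ℝ) • a - w) - ((2:ℝ) • b - v)‖ ^ 2 ≤ ‖w - v‖ ^ 2 := by
    have he : ((2:ℝ) • a - w) - ((2:ℝ) • b - v) = (2:ℝ) • (a - b) - (w - v) := by module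
    rw [he, norm_sub_sq_real, real_inner_smul_left, norm_smul, Real.norm_ofNat, mul_pow]
    nlinarith [hmono, hid, real_inner_comm (w - v) (a - b)]
  nlinarith [hsq, norm_nonneg (((2:ℝ) • a - w) - ((2:ℝ) • b - v)), norm_nonneg (w - v)]

end PRSHelpers

/-- Theorem (ergodic convergence of relaxed PRS): for closed, proper, convex
`f, g : H → ℝ ∪ {∞}`, `γ > 0`, a fixed point `z*` of `T_PRS` with `x* = prox_{γg}(z*)`,
relaxations `λ_k ∈ (0,1]`, iterates `z^{k+1} = (1−λ_k)z^k + λ_k T_PRS z^k`,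
`x_g^k = prox_{γg}(z^k)`, `x_f^k = prox_{γf}(2x_g^k − z^k)`, `Λ_k = ∑_{i≤k} λ_i`, and ergodic
iterates `x̄_f^k, x̄_g^k`, we have for every `k`:
`−2‖z^0−z*‖‖z*−x*‖/(γΛ_k) ≤ f(x̄_f^k) + g(x̄_g^k) − f(x*) − g(x*) ≤ ‖z^0−x*‖²/(4γΛ_k)`
and `‖x̄_g^k − x̄_f^k‖ ≤ 2‖z^0−z*‖/Λ_k`. -/
theorem relaxed_prs_ergodic_convergence
    {H : Type*} [NormedAddCommGroup H] [InnerProductSpace ℝ H] [CompleteSpace H]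
    (f g : H → EReal)
    (hf_bot : ∀ x, f x ≠ ⊥) (hg_bot : ∀ x, g x ≠ ⊥)
    (hf_proper : ∃ x, f x ≠ ⊤) (hg_proper : ∃ x, g x ≠ ⊤)
    (hf_lsc : LowerSemicontinuous f) (hg_lsc : LowerSemicontinuous g)
    (hf_conv : ∀ x y : H, ∀ a b : ℝ, 0 ≤ a → 0 ≤ b → a + b = 1 →
      f (a • x + b • y) ≤ (a : EReal) * f x + (b : EReal) * f y)
    (hg_conv : ∀ x y : H, ∀ a b : ℝ, 0 ≤ a → 0 ≤ b → a + b = 1 →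
      g (a • x + b • y) ≤ (a : EReal) * g x + (b : EReal) * g y)
    (γ : ℝ) (hγ : 0 < γ)
    (proxf proxg : H → H)
    (hproxf : ∀ x p : H, proxf x = p ↔
      ∀ y : H, f p + ((1 / (2 * γ) * ‖p - x‖ ^ 2 : ℝ) : EReal) ≤
        f y + ((1 / (2 * γ) * ‖y - x‖ ^ 2 : ℝ) : EReal))
    (hproxg : ∀ x p : H, proxg x = p ↔
      ∀ y : H, g p + ((1 / (2 * γ) * ‖p - x‖ ^ 2 : ℝ) : EReal) ≤
        g y + ((1 / (2 * γ) * ‖y - x‖ ^ 2 : ℝ) : EReal))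
    (T : H → H)
    (hT : ∀ w : H, T w = (2 : ℝ) • proxf ((2 : ℝ) • proxg w - w) - ((2 : ℝ) • proxg w - w))
    (zstar : H) (hzstar : T zstar = zstar)
    (xstar : H) (hxstar : xstar = proxg zstar)
    (lam : ℕ → ℝ) (hlam : ∀ k, lam k ∈ Set.Ioc (0 : ℝ) 1)
    (z : ℕ → H) (hz : ∀ k, z (k + 1) = (1 - lam k) • z k + lam k • T (z k))
    (xg xf : ℕ → H)
    (hxg : ∀ k, xg k = proxg (z k))
    (hxf : ∀ k, xf k = proxf ((2 : ℝ) • xg k - z k))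
    (xbarf xbarg : ℕ → H)
    (hxbarf : ∀ k, xbarf k = (1 / ∑ i ∈ Finset.range (k + 1), lam i) •
      ∑ i ∈ Finset.range (k + 1), lam i • xf i)
    (hxbarg : ∀ k, xbarg k = (1 / ∑ i ∈ Finset.range (k + 1), lam i) •
      ∑ i ∈ Finset.range (k + 1), lam i • xg i) :
    ∀ k : ℕ,
      ((-(2 * ‖z 0 - zstar‖ * ‖zstar - xstar‖ /
          (γ * ∑ i ∈ Finset.range (k + 1), lam i)) : ℝ) : EReal) ≤
        f (xbarf k) + g (xbarg k) - (f xstar + g xstar) ∧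
      f (xbarf k) + g (xbarg k) - (f xstar + g xstar) ≤
        ((‖z 0 - xstar‖ ^ 2 / (4 * γ * ∑ i ∈ Finset.range (k + 1), lam i) : ℝ) : EReal) ∧
      ‖xbarg k - xbarf k‖ ≤ 2 * ‖z 0 - zstar‖ / ∑ i ∈ Finset.range (k + 1), lam i := by
  obtain ⟨yf0, hyf0⟩ := hf_proper
  obtain ⟨yg0, hyg0⟩ := hg_proper
  have hΛpos : ∀ m : ℕ, 0 < ∑ i ∈ range (m + 1), lam i :=
    fun m => sum_pos (fun i _ => (hlam i).1) nonempty_range_add_one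
  have pf_min : ∀ x : H, ∀ y : H, f (proxf x) + ((1 / (2 * γ) * ‖proxf x - x‖ ^ 2 : ℝ) : EReal) ≤
      f y + ((1 / (2 * γ) * ‖y - x‖ ^ 2 : ℝ) : EReal) := fun x => (hproxf x (proxf x)).mp rfl
  have pg_min : ∀ x : H, ∀ y : H, g (proxg x) + ((1 / (2 * γ) * ‖proxg x - x‖ ^ 2 : ℝ) : EReal) ≤
      g y + ((1 / (2 * γ) * ‖y - x‖ ^ 2 : ℝ) : EReal) := fun x => (hproxg x (proxg x)).mp rfl
  have keyf : ∀ x : H, ∃ r : ℝ, f (proxf x) = (r : EReal) ∧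
      ∀ y, ((r + 1 / γ * ⟪x - proxf x, y - proxf x⟫ : ℝ) : EReal) ≤ f y := by
    intro x
    obtain ⟨r, hr⟩ := aux_finite hf_bot hyf0 (pf_min x yf0)
    exact ⟨r, hr, aux_subgrad hf_bot hf_conv hγ hr (pf_min x)⟩
  have keyg : ∀ x : H, ∃ r : ℝ, g (proxg x) = (r : EReal) ∧
      ∀ y, ((r + 1 / γ * ⟪x - proxg x, y - proxg x⟫ : ℝ) : EReal) ≤ g y := by
    intro x
    obtain ⟨r, hr⟩ := aux_finite hg_bot hyg0 (pg_min x yg0)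
    exact ⟨r, hr, aux_subgrad hg_bot hg_conv hγ hr (pg_min x)⟩
  choose Rf hRf hRfsub using keyf
  choose Rg hRg hRgsub using keyg
  -- fixed-point facts
  have hfix : proxf ((2 : ℝ) • xstar - zstar) = xstar := by
    have h := hzstar
    rw [hT, ← hxstar] at h
    have h2 : (2 : ℝ) • proxf ((2 : ℝ) • xstar - zstar) = (2 : ℝ) • xstar := by
      rw [sub_eq_iff_eq_add] at h
      rw [h]
      abel
    exact smul_right_injective H (by norm_num : (2:ℝ) ≠ 0) h2
  have hfstar : f xstar = ((Rf ((2 : ℝ) • xstar - zstar) : ℝ) : EReal) := by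
    have := hRf ((2 : ℝ) • xstar - zstar); rwa [hfix] at this
  have hgstar : g xstar = ((Rg zstar : ℝ) : EReal) := by
    have := hRg zstar; rwa [← hxstar] at this
  have hfsubstar : ∀ y, ((Rf ((2 : ℝ) • xstar - zstar) +
      1 / γ * ⟪xstar - zstar, y - xstar⟫ : ℝ) : EReal) ≤ f y := by
    intro y
    have h := hRfsub ((2 : ℝ) • xstar - zstar) y
    rw [hfix] at h
    have harg : (2 : ℝ) • xstar - zstar - xstar = xstar - zstar := by module
    rwa [harg] at h
  have hgsubstar : ∀ y, ((Rg zstar + 1 / γ * ⟪zstar - xstar, y - xstar⟫ : ℝ) : EReal) ≤ g y := by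
    intro y
    have h := hRgsub zstar y
    rwa [← hxstar] at h
  -- T on iterates
  have hTz : ∀ j : ℕ, T (z j) = (2 : ℝ) • xf j - ((2 : ℝ) • xg j - z j) := by
    intro j
    rw [hT, ← hxg j, ← hxf j]
  have hzstep : ∀ j : ℕ, z (j + 1) = z j + (2 * lam j) • (xf j - xg j) := by
    intro j
    rw [hz j, hTz j]
    module
  -- per-step values and inequality
  have hval : ∀ j : ℕ, ∃ rf rg : ℝ, f (xf j) = (rf : EReal) ∧ g (xg j) = (rg : EReal) ∧
      4 * γ * lam j * ((rf + rg) - (Rf ((2 : ℝ) • xstar - zstar) + Rg zstar)) ≤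
        ‖z j - xstar‖ ^ 2 - ‖z (j + 1) - xstar‖ ^ 2 := by
    intro j
    refine ⟨Rf ((2 : ℝ) • xg j - z j), Rg (z j),
      by rw [hxf j]; exact hRf _, by rw [hxg j]; exact hRg _, ?_⟩
    have hAf : Rf ((2 : ℝ) • xg j - z j) +
        1 / γ * ⟪(2 : ℝ) • xg j - z j - xf j, xstar - xf j⟫ ≤ Rf ((2 : ℝ) • xstar - zstar) := by
      have h := hRfsub ((2 : ℝ) • xg j - z j) xstar
      rw [← hxf j, hfstar, EReal.coe_le_coe_iff] at h
      exact h
    have hAg : Rg (z j) + 1 / γ * ⟪z j - xg j, xstar - xg j⟫ ≤ Rg zstar := by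
      have h := hRgsub (z j) xstar
      rw [← hxg j, hgstar, EReal.coe_le_coe_iff] at h
      exact h
    have hid : ⟪(2 : ℝ) • xg j - z j - xf j, xstar - xf j⟫ + ⟪z j - xg j, xstar - xg j⟫ =
        ‖xf j - xg j‖ ^ 2 + ⟪z j - xstar, xf j - xg j⟫ := aux_key_id (xg j) (xf j) (z j) xstar
    have eAf : γ * (Rf ((2 : ℝ) • xg j - z j) +
        1 / γ * ⟪(2 : ℝ) • xg j - z j - xf j, xstar - xf j⟫) =
        γ * Rf ((2 : ℝ) • xg j - z j) + ⟪(2 : ℝ) • xg j - z j - xf j, xstar - xf j⟫ := by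
      field_simp
    have eAg : γ * (Rg (z j) + 1 / γ * ⟪z j - xg j, xstar - xg j⟫) =
        γ * Rg (z j) + ⟪z j - xg j, xstar - xg j⟫ := by field_simp
    have hAf' := mul_le_mul_of_nonneg_left hAf hγ.le
    have hAg' := mul_le_mul_of_nonneg_left hAg hγ.le
    rw [eAf] at hAf'
    rw [eAg] at hAg'
    have hmain : γ * ((Rf ((2 : ℝ) • xg j - z j) + Rg (z j)) -
        (Rf ((2 : ℝ) • xstar - zstar) + Rg zstar)) ≤
        -‖xf j - xg j‖ ^ 2 - ⟪z j - xstar, xf j - xg j⟫ := by nlinarith [hAf', hAg', hid]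
    have hzj : z (j + 1) - xstar = (z j - xstar) + (2 * lam j) • (xf j - xg j) := by
      rw [hzstep j]; module
    have hzexp : ‖z (j + 1) - xstar‖ ^ 2 = ‖z j - xstar‖ ^ 2 +
        4 * lam j * ⟪z j - xstar, xf j - xg j⟫ + 4 * (lam j) ^ 2 * ‖xf j - xg j‖ ^ 2 := by
      rw [hzj, norm_add_sq_real, real_inner_smul_right, norm_smul, Real.norm_eq_abs,
        mul_pow, sq_abs]
      ring
    have h4 := mul_le_mul_of_nonneg_left hmain (by linarith [(hlam j).1] : (0:ℝ) ≤ 4 * lam j)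
    have h5 : 4 * (lam j) ^ 2 * ‖xf j - xg j‖ ^ 2 ≤ 4 * lam j * ‖xf j - xg j‖ ^ 2 := by
      have hnn : 0 ≤ lam j * (1 - lam j) * ‖xf j - xg j‖ ^ 2 :=
        mul_nonneg (mul_nonneg (hlam j).1.le (by linarith [(hlam j).2])) (sq_nonneg _)
      nlinarith [hnn]
    nlinarith [h4, h5, hzexp]
  choose pf pg hpf hpg hstep using hval
  -- telescoped sum
  have htel : ∀ m : ℕ, 4 * γ * (∑ i ∈ range (m + 1),
        lam i * ((pf i + pg i) - (Rf ((2 : ℝ) • xstar - zstar) + Rg zstar)))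
      ≤ ‖z 0 - xstar‖ ^ 2 - ‖z (m + 1) - xstar‖ ^ 2 := by
    intro m
    induction m with
    | zero => simp only [zero_add, range_one, sum_singleton]; nlinarith [hstep 0]
    | succ n ihn =>
        rw [sum_range_succ]
        nlinarith [hstep (n + 1), ihn]
  -- nonexpansiveness of T towards zstar
  have hTnon : ∀ w : H, ‖T w - zstar‖ ≤ ‖w - zstar‖ := by
    intro w
    have h1 : Rg w + 1 / γ * ⟪w - proxg w, proxg zstar - proxg w⟫ ≤ Rg zstar := by
      have h := hRgsub w (proxg zstar)
      rw [hRg zstar, EReal.coe_le_coe_iff] at h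
      exact h
    have h2 : Rg zstar + 1 / γ * ⟪zstar - proxg zstar, proxg w - proxg zstar⟫ ≤ Rg w := by
      have h := hRgsub zstar (proxg w)
      rw [hRg w, EReal.coe_le_coe_iff] at h
      exact h
    have hg_ne : ‖((2:ℝ) • proxg w - w) - ((2:ℝ) • proxg zstar - zstar)‖ ≤ ‖w - zstar‖ :=
      aux_refl_nonexp hγ h1 h2
    have h3 : Rf ((2:ℝ) • proxg w - w) + 1 / γ * ⟪((2:ℝ) • proxg w - w) -
        proxf ((2:ℝ) • proxg w - w), proxf ((2:ℝ) • proxg zstar - zstar) -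
        proxf ((2:ℝ) • proxg w - w)⟫ ≤ Rf ((2:ℝ) • proxg zstar - zstar) := by
      have h := hRfsub ((2:ℝ) • proxg w - w) (proxf ((2:ℝ) • proxg zstar - zstar))
      rw [hRf ((2:ℝ) • proxg zstar - zstar), EReal.coe_le_coe_iff] at h
      exact h
    have h4 : Rf ((2:ℝ) • proxg zstar - zstar) + 1 / γ * ⟪((2:ℝ) • proxg zstar - zstar) -
        proxf ((2:ℝ) • proxg zstar - zstar), proxf ((2:ℝ) • proxg w - w) -
        proxf ((2:ℝ) • proxg zstar - zstar)⟫ ≤ Rf ((2:ℝ) • proxg w - w) := by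
      have h := hRfsub ((2:ℝ) • proxg zstar - zstar) (proxf ((2:ℝ) • proxg w - w))
      rw [hRf ((2:ℝ) • proxg w - w), EReal.coe_le_coe_iff] at h
      exact h
    have hf_ne := aux_refl_nonexp hγ h3 h4
    have hTzstar : (2:ℝ) • proxf ((2:ℝ) • proxg zstar - zstar) -
        ((2:ℝ) • proxg zstar - zstar) = zstar := by
      rw [← hxstar, hfix]
      module
    calc ‖T w - zstar‖ = ‖((2:ℝ) • proxf ((2:ℝ) • proxg w - w) - ((2:ℝ) • proxg w - w)) -
          ((2:ℝ) • proxf ((2:ℝ) • proxg zstar - zstar) - ((2:ℝ) • proxg zstar - zstar))‖ := by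
          rw [hT w, hTzstar]
      _ ≤ ‖((2:ℝ) • proxg w - w) - ((2:ℝ) • proxg zstar - zstar)‖ := hf_ne
      _ ≤ ‖w - zstar‖ := hg_ne
  -- Fejér monotonicity
  have hfej : ∀ m : ℕ, ‖z m - zstar‖ ≤ ‖z 0 - zstar‖ := by
    intro m
    induction m with
    | zero => exact le_refl _
    | succ n ihn =>
        have hcombo : z (n + 1) - zstar =
            (1 - lam n) • (z n - zstar) + lam n • (T (z n) - zstar) := by
          rw [hz n]; module
        have hle : ‖z (n + 1) - zstar‖ ≤
            (1 - lam n) * ‖z n - zstar‖ + lam n * ‖T (z n) - zstar‖ := by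
          rw [hcombo]
          refine le_trans (norm_add_le _ _) ?_
          rw [norm_smul, norm_smul, Real.norm_eq_abs, Real.norm_eq_abs,
            abs_of_nonneg (by linarith [(hlam n).2] : (0:ℝ) ≤ 1 - lam n),
            abs_of_nonneg (hlam n).1.le]
        nlinarith [(hlam n).1, (hlam n).2, hle, hTnon (z n), ihn, norm_nonneg (z n - zstar)]
  intro k
  have hΛk : 0 < ∑ i ∈ range (k + 1), lam i := hΛpos k
  -- third claim
  have hterm : ∀ i : ℕ, lam i • xg i - lam i • xf i = ((1:ℝ)/2) • (z i - z (i + 1)) := by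
    intro i
    rw [hzstep i]
    module
  have hdiff : xbarg k - xbarf k =
      (1 / (2 * ∑ i ∈ range (k + 1), lam i)) • (z 0 - z (k + 1)) := by
    rw [hxbarg k, hxbarf k, ← smul_sub, ← sum_sub_distrib,
      Finset.sum_congr rfl (fun i _ => hterm i), ← Finset.smul_sum,
      Finset.sum_range_sub' z, smul_smul]
    congr 1
    field_simp
  have hnormdiff : ‖xbarg k - xbarf k‖ =
      1 / (2 * ∑ i ∈ range (k + 1), lam i) * ‖z 0 - z (k + 1)‖ := by
    rw [hdiff, norm_smul, Real.norm_eq_abs, abs_of_pos (by positivity)]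
  have hz0k : ‖z 0 - z (k + 1)‖ ≤ 2 * ‖z 0 - zstar‖ := by
    have htri : ‖z 0 - z (k + 1)‖ ≤ ‖z 0 - zstar‖ + ‖z (k + 1) - zstar‖ := by
      calc ‖z 0 - z (k + 1)‖ = ‖(z 0 - zstar) + (zstar - z (k + 1))‖ := by congr 1; abel
        _ ≤ ‖z 0 - zstar‖ + ‖zstar - z (k + 1)‖ := norm_add_le _ _
        _ = ‖z 0 - zstar‖ + ‖z (k + 1) - zstar‖ := by rw [norm_sub_rev zstar]
    linarith [hfej (k + 1)]
  have hthird : ‖xbarg k - xbarf k‖ ≤ 2 * ‖z 0 - zstar‖ / ∑ i ∈ range (k + 1), lam i := by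
    rw [hnormdiff, le_div_iff₀ hΛk]
    have he : 1 / (2 * ∑ i ∈ range (k + 1), lam i) * ‖z 0 - z (k + 1)‖ *
        ∑ i ∈ range (k + 1), lam i = ‖z 0 - z (k + 1)‖ / 2 := by
      field_simp
    rw [he]
    linarith [hz0k, norm_nonneg (z 0 - zstar)]
  -- Jensen bounds
  have hjf := aux_jensen hf_bot hf_conv lam (fun i => (hlam i).1) xf pf hpf k
  have hjg := aux_jensen hg_bot hg_conv lam (fun i => (hlam i).1) xg pg hpg k
  rw [← hxbarf k] at hjf
  rw [← hxbarg k] at hjg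
  have hFne : f (xbarf k) ≠ ⊤ := by
    intro h; rw [h, top_le_iff] at hjf; exact EReal.coe_ne_top _ hjf
  have hGne : g (xbarg k) ≠ ⊤ := by
    intro h; rw [h, top_le_iff] at hjg; exact EReal.coe_ne_top _ hjg
  have hFb : f (xbarf k) = (((f (xbarf k)).toReal : ℝ) : EReal) :=
    (EReal.coe_toReal hFne (hf_bot _)).symm
  have hGb : g (xbarg k) = (((g (xbarg k)).toReal : ℝ) : EReal) :=
    (EReal.coe_toReal hGne (hg_bot _)).symm
  set Fb := (f (xbarf k)).toReal with hFbdef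
  set Gb := (g (xbarg k)).toReal with hGbdef
  have hFble : Fb ≤ (1 / ∑ i ∈ range (k + 1), lam i) * ∑ i ∈ range (k + 1), lam i * pf i := by
    rw [hFb] at hjf; exact EReal.coe_le_coe_iff.mp hjf
  have hGble : Gb ≤ (1 / ∑ i ∈ range (k + 1), lam i) * ∑ i ∈ range (k + 1), lam i * pg i := by
    rw [hGb] at hjg; exact EReal.coe_le_coe_iff.mp hjg
  -- rewrite the goal in real terms
  rw [hFb, hGb, hfstar, hgstar]
  have hcoe : ((Fb : EReal) + (Gb : EReal)) - (((Rf ((2 : ℝ) • xstar - zstar) : ℝ) : EReal) +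
      ((Rg zstar : ℝ) : EReal)) =
      ((Fb + Gb - (Rf ((2 : ℝ) • xstar - zstar) + Rg zstar) : ℝ) : EReal) := by
    rw [← EReal.coe_add, ← EReal.coe_add, ← EReal.coe_sub]
  rw [hcoe]
  refine ⟨EReal.coe_le_coe_iff.mpr ?_, EReal.coe_le_coe_iff.mpr ?_, hthird⟩
  · -- lower bound
    have hLf : Rf ((2 : ℝ) • xstar - zstar) + 1 / γ * ⟪xstar - zstar, xbarf k - xstar⟫ ≤ Fb := by
      have h := hfsubstar (xbarf k); rw [hFb, EReal.coe_le_coe_iff] at h; exact h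
    have hLg : Rg zstar + 1 / γ * ⟪zstar - xstar, xbarg k - xstar⟫ ≤ Gb := by
      have h := hgsubstar (xbarg k); rw [hGb, EReal.coe_le_coe_iff] at h; exact h
    have eLf : γ * (Rf ((2 : ℝ) • xstar - zstar) + 1 / γ * ⟪xstar - zstar, xbarf k - xstar⟫) =
        γ * Rf ((2 : ℝ) • xstar - zstar) + ⟪xstar - zstar, xbarf k - xstar⟫ := by
      field_simp
    have eLg : γ * (Rg zstar + 1 / γ * ⟪zstar - xstar, xbarg k - xstar⟫) =
        γ * Rg zstar + ⟪zstar - xstar, xbarg k - xstar⟫ := by field_simp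
    have hLf' := mul_le_mul_of_nonneg_left hLf hγ.le
    have hLg' := mul_le_mul_of_nonneg_left hLg hγ.le
    rw [eLf] at hLf'
    rw [eLg] at hLg'
    have hJ : ⟪zstar - xstar, xbarg k - xstar⟫ + ⟪xstar - zstar, xbarf k - xstar⟫ =
        ⟪zstar - xstar, xbarg k - xbarf k⟫ := by
      have h1 : ⟪xstar - zstar, xbarf k - xstar⟫ = -⟪zstar - xstar, xbarf k - xstar⟫ := by
        rw [← neg_sub zstar xstar, inner_neg_left]
      have h2 : ⟪zstar - xstar, xbarg k - xbarf k⟫ =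
          ⟪zstar - xstar, xbarg k - xstar⟫ - ⟪zstar - xstar, xbarf k - xstar⟫ := by
        rw [← inner_sub_right]; congr 1; abel
      rw [h1, h2]; ring
    have hCS : -(‖zstar - xstar‖ * ‖xbarg k - xbarf k‖) ≤
        ⟪zstar - xstar, xbarg k - xbarf k⟫ := by
      have h := abs_real_inner_le_norm (zstar - xstar) (xbarg k - xbarf k)
      have h2 := neg_abs_le ⟪zstar - xstar, xbarg k - xbarf k⟫
      linarith
    have hth2 : (∑ i ∈ range (k + 1), lam i) * ‖xbarg k - xbarf k‖ ≤ 2 * ‖z 0 - zstar‖ := by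
      have h := hthird
      rw [le_div_iff₀ hΛk] at h
      linarith [h]
    have hγD : ⟪zstar - xstar, xbarg k - xbarf k⟫ ≤
        γ * (Fb + Gb - (Rf ((2 : ℝ) • xstar - zstar) + Rg zstar)) := by
      nlinarith [hLf', hLg', hJ]
    rw [← neg_div, div_le_iff₀ (by positivity : (0:ℝ) < γ * ∑ i ∈ range (k + 1), lam i)]
    have h10 := mul_le_mul_of_nonneg_left hγD hΛk.le
    have h11 := mul_le_mul_of_nonneg_left hCS hΛk.le
    have h13 := mul_le_mul_of_nonneg_left hth2 (norm_nonneg (zstar - xstar))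
    nlinarith [h10, h11, h13]
  · -- upper bound
    have h0 : ∀ i ∈ range (k + 1),
        lam i * ((pf i + pg i) - (Rf ((2 : ℝ) • xstar - zstar) + Rg zstar)) =
        (lam i * pf i + lam i * pg i) -
          (Rf ((2 : ℝ) • xstar - zstar) + Rg zstar) * lam i := fun i _ => by ring
    have htelk := htel k
    rw [Finset.sum_congr rfl h0, sum_sub_distrib, sum_add_distrib, ← Finset.mul_sum] at htelk
    have hub : 4 * γ * ((∑ i ∈ range (k + 1), lam i * pf i) +
        (∑ i ∈ range (k + 1), lam i * pg i) -
        (Rf ((2 : ℝ) • xstar - zstar) + Rg zstar) * ∑ i ∈ range (k + 1), lam i) ≤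
        ‖z 0 - xstar‖ ^ 2 := by
      nlinarith [htelk, sq_nonneg ‖z (k + 1) - xstar‖]
    have eF : (∑ i ∈ range (k + 1), lam i) *
        ((1 / ∑ i ∈ range (k + 1), lam i) * ∑ i ∈ range (k + 1), lam i * pf i) =
        ∑ i ∈ range (k + 1), lam i * pf i := by field_simp
    have eG : (∑ i ∈ range (k + 1), lam i) *
        ((1 / ∑ i ∈ range (k + 1), lam i) * ∑ i ∈ range (k + 1), lam i * pg i) =
        ∑ i ∈ range (k + 1), lam i * pg i := by field_simp
    have hFble' : (∑ i ∈ range (k + 1), lam i) * Fb ≤ ∑ i ∈ range (k + 1), lam i * pf i := by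
      have h := mul_le_mul_of_nonneg_left hFble hΛk.le
      rwa [eF] at h
    have hGble' : (∑ i ∈ range (k + 1), lam i) * Gb ≤ ∑ i ∈ range (k + 1), lam i * pg i := by
      have h := mul_le_mul_of_nonneg_left hGble hΛk.le
      rwa [eG] at h
    rw [le_div_iff₀ (by positivity : (0:ℝ) < 4 * γ * ∑ i ∈ range (k + 1), lam i)]
    have h20 := mul_le_mul_of_nonneg_left (add_le_add hFble' hGble')
      (by positivity : (0:ℝ) ≤ 4 * γ)
    nlinarith [hub, h20]
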